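/- Let T be the rooted tree with vertex set {0,1,…,K} ∪ {K₋₁, K₊₁}, root 0, parent of k equal to k−1 for k=1,…,K, and parent of both K₋₁ and K₊₁ equal to K. Let D = T₁×…×T_n with each T_i a copy of T, and let D̃ be the product over i∈V of K+1 factors D̃_{i0}=…=D̃_{iK−1}={0,1} and D̃_{iK}={−1,0,+1}, where each factor is viewed as a star tree rooted at 0 (every nonzero label a child of 0) with the induced operations ∧ (highest common ancestor) and ∨. Define ψ:D→D̃ by: if x_i = k ∈ {0,…,K} then (y_{i0},…,y_{iK}) = (1,…,1,0,…,0) with k ones; if x_i = K₋₁ then (y_{i0},…,y_{iK−1},y_{iK}) = (1,…,1,−1); if x_i = K₊₁ then (y_{i0},…,y_{iK−1},y_{iK}) = (1,…,1,+1). Then ψ is injective and preserves the operations ∧ and ∨: ψ(x∧y) = ψ(x)∧ψ(y) and ψ(x∨y) = ψ(x)∨ψ(y) for all x,y∈D; consequently the image of ψ is closed under ∧ and ∨ (it is a signed ring family). -/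

import Mathlib

/-- A finite rooted tree on vertex set `V`, encoded by its root, the parent function
(with `parent root = root`) and the depth function (distance to the root). -/
structure RTree (V : Type*) where
  root : V
  parent : V → V
  depth : V → ℕ
  parent_root : parent root = root
  depth_root : depth root = 0
  depth_parent : ∀ v, v ≠ root → depth (parent v) + 1 = depth v

namespace RTree

variable {V : Type*} (T : RTree V)

/-- `a ⪯ b` : `a` is an ancestor of `b`, i.e. `a` lies on the path from `b` to the root. -/
def anc (a b : V) : Prop := ∃ k : ℕ, T.parent^[k] b = a

theorem iterate_depth_aux : ∀ (n : ℕ) (v : V), T.depth v = n → T.parent^[n] v = T.root := by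
  intro n
  induction n with
  | zero =>
    intro v hn
    by_cases hv : v = T.root
    · simp [hv]
    · have := T.depth_parent v hv; omega
  | succ n ih =>
    intro v hn
    have hv : v ≠ T.root := by
      intro h; rw [h, T.depth_root] at hn; omega
    have h := T.depth_parent v hv
    rw [Function.iterate_succ_apply]
    exact ih (T.parent v) (by omega)

theorem iterate_depth (v : V) : T.parent^[T.depth v] v = T.root :=
  T.iterate_depth_aux (T.depth v) v rfl

theorem anc_root (b : V) : T.anc T.root b := ⟨T.depth b, T.iterate_depth b⟩

theorem exists_lcaIndex (a b : V) : ∃ k : ℕ, T.anc (T.parent^[k] a) b :=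
  ⟨T.depth a, by rw [T.iterate_depth a]; exact T.anc_root b⟩

open Classical in
/-- The highest common ancestor of `a` and `b` : the deepest vertex that is an ancestor
of both `a` and `b` (i.e. the unique vertex of the path `P[a→b]` that is an ancestor of both). -/
noncomputable def lca (a b : V) : V := T.parent^[Nat.find (T.exists_lcaIndex a b)] a

/-- `ρ(a,b)` : the number of edges of the unique path `P[a→b]` from `a` to `b`. -/
noncomputable def dist (a b : V) : ℕ :=
  (T.depth a - T.depth (T.lca a b)) + (T.depth b - T.depth (T.lca a b))

open Classical in
/-- `P[a→b, d]` : the `d`-th vertex of the path from `a` to `b` (first the ascending part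
from `a` to the highest common ancestor, then the descending part towards `b`);
by convention it equals `b` for `d > ρ(a,b)`. -/
noncomputable def pathVertex (a b : V) (d : ℕ) : V :=
  if T.dist a b ≤ d then b
  else if d ≤ T.depth a - T.depth (T.lca a b) then T.parent^[d] a
  else T.parent^[T.dist a b - d] b

open Classical in
/-- `a ⊓ b` : the member of `{P[a→b,⌊ρ(a,b)/2⌋], P[a→b,⌈ρ(a,b)/2⌉]}` that is an
ancestor of the other one. -/
noncomputable def cap (a b : V) : V :=
  if T.anc (T.pathVertex a b (T.dist a b / 2)) (T.pathVertex a b ((T.dist a b + 1) / 2))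
  then T.pathVertex a b (T.dist a b / 2)
  else T.pathVertex a b ((T.dist a b + 1) / 2)

open Classical in
/-- `a ⊔ b` : the member of `{P[a→b,⌊ρ(a,b)/2⌋], P[a→b,⌈ρ(a,b)/2⌉]}` that is a
descendant of the other one. -/
noncomputable def cup (a b : V) : V :=
  if T.anc (T.pathVertex a b (T.dist a b / 2)) (T.pathVertex a b ((T.dist a b + 1) / 2))
  then T.pathVertex a b ((T.dist a b + 1) / 2)
  else T.pathVertex a b (T.dist a b / 2)

/-- `a ∧ b` : the highest common ancestor of `a` and `b`. -/
noncomputable def meet (a b : V) : V := T.lca a b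

/-- `a ∨ b` : the unique vertex of `P[a→b]` with `ρ(a, a∨b) = ρ(a∧b, b)`. -/
noncomputable def join (a b : V) : V :=
  T.pathVertex a b (T.depth b - T.depth (T.lca a b))

/-- `a ↑^d b = P[a→b,d] ∧ b`. -/
noncomputable def up (d : ℕ) (a b : V) : V := T.meet (T.pathVertex a b d) b

/-- `a ↓_d b = P[a→b, ρ(a ↑^d b, b)]`. -/
noncomputable def down (d : ℕ) (a b : V) : V :=
  T.pathVertex a b (T.dist (T.up d a b) b)

end RTree

section Product

variable {ι : Type*} {V : ι → Type*}

/-- `f` is strongly tree-submodular w.r.t. the trees `T i`: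
`f(x) + f(y) ≥ f(x ⊓ y) + f(x ⊔ y)`, the operations acting componentwise. -/
def StronglyTreeSubmodular (T : ∀ i, RTree (V i)) (f : (∀ i, V i) → ℝ) : Prop :=
  ∀ x y : ∀ i, V i,
    f (fun i => (T i).cap (x i) (y i)) + f (fun i => (T i).cup (x i) (y i)) ≤ f x + f y

/-- `INWARD(x) = { y ∈ NEIB(x) : y ⪯ x }`, where `NEIB(x) = {y : max_i ρ(x_i,y_i) ≤ 1}`. -/
def inward (T : ∀ i, RTree (V i)) (x : ∀ i, V i) : Set (∀ i, V i) :=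
  {y | (∀ i, (T i).dist (x i) (y i) ≤ 1) ∧ ∀ i, (T i).anc (y i) (x i)}

/-- `OUTWARD(x) = { y ∈ NEIB(x) : x ⪯ y }`. -/
def outward (T : ∀ i, RTree (V i)) (x : ∀ i, V i) : Set (∀ i, V i) :=
  {y | (∀ i, (T i).dist (x i) (y i) ≤ 1) ∧ ∀ i, (T i).anc (x i) (y i)}

end Product

/-- The rooted tree with vertex set `{0,1,…,K} ∪ {K₋₁, K₊₁}` (encoded as `Fin (K+3)`,
with `K₋₁ = K+1` and `K₊₁ = K+2`), root `0`, parent of `k` equal to `k-1` for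
`k = 1,…,K`, and parent of both `K₋₁` and `K₊₁` equal to `K`. -/
def figDTree (K : ℕ) : RTree (Fin (K + 3)) where
  root := ⟨0, by omega⟩
  parent v := if v.val ≤ K then ⟨v.val - 1, Nat.lt_of_le_of_lt (Nat.sub_le _ _) v.isLt⟩
    else ⟨K, by omega⟩
  depth v := if v.val ≤ K then v.val else K + 1
  parent_root := by simp
  depth_root := by simp
  depth_parent v hv := by
    have hv0 : v.val ≠ 0 := fun h => hv (Fin.ext h)
    by_cases h1 : v.val ≤ K
    · simp only [if_pos h1]
      show (if v.val - 1 ≤ K then v.val - 1 else K + 1) + 1 = v.val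
      rw [if_pos (by omega : v.val - 1 ≤ K)]
      omega
    · simp only [if_neg h1]
      show (if K ≤ K then K else K + 1) + 1 = K + 1
      rw [if_pos (le_refl K)]

/-- `a ∧ b` on a star tree rooted at `0` (all nonzero labels children of `0`). -/
def swedge (a b : SignType) : SignType := if a = b then a else 0

/-- `a ∨ b` on a star tree rooted at `0`: `a` if `a = b`, and `a + b` (as an element of
`{-1,0,+1}`) otherwise. -/
noncomputable def svee (a b : SignType) : SignType :=
  if a = b then a else SignType.sign ((a : ℤ) + (b : ℤ))

/-- The map `ψ : D → D̃`, sending `x_i = k ∈ {0,…,K}` to `(1,…,1,0,…,0)` with `k` ones,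
`x_i = K₋₁` to `(1,…,1,-1)` and `x_i = K₊₁` to `(1,…,1,+1)`. -/
def psi {ι : Type*} (K : ℕ) (x : ι → Fin (K + 3)) : ι → Fin (K + 1) → SignType :=
  fun i k =>
    if (x i).val ≤ K then (if k.val < (x i).val then 1 else 0)
    else if k.val < K then 1
    else if (x i).val = K + 1 then -1 else 1

section Aux

variable {K : ℕ}

/-- explicit depth function of `figDTree` -/
private def dep (K : ℕ) (v : Fin (K + 3)) : ℕ := if v.val ≤ K then v.val else K + 1

private lemma fig_depth (v : Fin (K + 3)) : (figDTree K).depth v = dep K v := rfl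

private lemma fig_parent_val (v : Fin (K + 3)) :
    ((figDTree K).parent v).val = if v.val ≤ K then v.val - 1 else K := by
  show (if v.val ≤ K then (⟨v.val - 1, _⟩ : Fin (K+3)) else ⟨K, _⟩).val = _
  split <;> rfl

private lemma dep_facts (v : Fin (K + 3)) :
    (v.val ≤ K ∧ dep K v = v.val) ∨ (K < v.val ∧ v.val ≤ K + 2 ∧ dep K v = K + 1) := by
  unfold dep; split
  · left; omega
  · right; refine ⟨by omega, by omega, rfl⟩

private lemma fig_iter (j : ℕ) (v : Fin (K + 3)) (h : 1 ≤ j ∨ v.val ≤ K) :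
    (((figDTree K).parent)^[j] v).val = dep K v - j := by
  induction j generalizing v with
  | zero =>
    rcases h with h | h
    · omega
    · simp [dep, h]
  | succ n ih =>
    rw [Function.iterate_succ_apply]
    have hpv : ((figDTree K).parent v).val = if v.val ≤ K then v.val - 1 else K :=
      fig_parent_val v
    have h1 : ((figDTree K).parent v).val ≤ K := by rw [hpv]; split <;> omega
    rw [ih _ (Or.inr h1)]
    have h2 : dep K ((figDTree K).parent v) = ((figDTree K).parent v).val := by
      unfold dep; rw [if_pos h1]
    rw [h2, hpv]
    unfold dep; split_ifs <;> omega

private lemma fig_iter' (j : ℕ) (v : Fin (K + 3)) :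
    (((figDTree K).parent)^[j] v).val = if j = 0 then v.val else dep K v - j := by
  split_ifs with h
  · rw [h]; rfl
  · exact fig_iter j v (Or.inl (by omega))

private lemma fig_anc (u b : Fin (K + 3)) :
    (figDTree K).anc u b ↔ u = b ∨ (u.val ≤ K ∧ u.val ≤ b.val) := by
  constructor
  · rintro ⟨j, hj⟩
    rcases Nat.eq_zero_or_pos j with hj0 | hj1
    · left; rw [hj0] at hj; exact hj.symm
    · right
      have hv := fig_iter j b (Or.inl hj1)
      rw [hj] at hv
      rcases dep_facts b with ⟨h1, h2⟩ | ⟨h1, h2, h3⟩ <;> omega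
  · rintro (rfl | ⟨h1, h2⟩)
    · exact ⟨0, rfl⟩
    · refine ⟨dep K b - u.val, ?_⟩
      have hor : 1 ≤ dep K b - u.val ∨ b.val ≤ K := by
        rcases dep_facts b with ⟨g1, g2⟩ | ⟨g1, g2, g3⟩ <;> omega
      have hv := fig_iter (dep K b - u.val) b hor
      apply Fin.ext
      rw [hv]
      rcases dep_facts b with ⟨g1, g2⟩ | ⟨g1, g2, g3⟩ <;> omega

/-- explicit description of the lca in `figDTree` -/
private def mfin (K : ℕ) (a b : Fin (K + 3)) : Fin (K + 3) :=
  if a.val = b.val then a else ⟨min (min a.val b.val) K, by omega⟩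

private lemma fig_lca (a b : Fin (K + 3)) : (figDTree K).lca a b = mfin K a b := by
  classical
  unfold RTree.lca
  by_cases hab : a.val = b.val
  · have hab' : a = b := Fin.ext hab
    have h0 : Nat.find ((figDTree K).exists_lcaIndex a b) = 0 := by
      rw [Nat.find_eq_zero]
      show (figDTree K).anc ((figDTree K).parent^[0] a) b
      rw [Function.iterate_zero_apply, fig_anc]
      exact Or.inl hab'
    rw [h0, Function.iterate_zero_apply]
    unfold mfin; rw [if_pos hab]
  · have hma : min (min a.val b.val) K ≤ dep K a := by
      rcases dep_facts a with ⟨g1, g2⟩ | ⟨g1, g2, g3⟩ <;> omega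
    have hfind : Nat.find ((figDTree K).exists_lcaIndex a b)
        = dep K a - min (min a.val b.val) K := by
      rw [Nat.find_eq_iff]
      constructor
      · show (figDTree K).anc ((figDTree K).parent^[dep K a - min (min a.val b.val) K] a) b
        rw [fig_anc]
        right
        rw [fig_iter' _ a]
        split_ifs with h
        · rcases dep_facts a with ⟨g1, g2⟩ | ⟨g1, g2, g3⟩ <;> omega
        · rcases dep_facts a with ⟨g1, g2⟩ | ⟨g1, g2, g3⟩ <;> omega
      · intro n hn hP
        have hanc := (fig_anc _ b).mp hP
        have hv := fig_iter' n a
        rcases hanc with h | ⟨h1, h2⟩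
        · have hw : ((figDTree K).parent^[n] a).val = b.val := congrArg Fin.val h
          rw [hv] at hw
          split_ifs at hw with h0
          · exact hab hw
          · rcases dep_facts a with ⟨g1, g2⟩ | ⟨g1, g2, g3⟩ <;> omega
        · rw [hv] at h1 h2
          split_ifs at h1 h2 with h0
          · rcases dep_facts a with ⟨g1, g2⟩ | ⟨g1, g2, g3⟩ <;> omega
          · rcases dep_facts a with ⟨g1, g2⟩ | ⟨g1, g2, g3⟩ <;> omega
    rw [hfind]
    apply Fin.ext
    rw [fig_iter' _ a]
    unfold mfin; rw [if_neg hab]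
    split_ifs with h
    · rcases dep_facts a with ⟨g1, g2⟩ | ⟨g1, g2, g3⟩ <;>
        simp only [Fin.val_mk] <;> omega
    · rcases dep_facts a with ⟨g1, g2⟩ | ⟨g1, g2, g3⟩ <;>
        simp only [Fin.val_mk] <;> omega

private lemma fig_meet_val (a b : Fin (K + 3)) :
    ((figDTree K).meet a b).val =
      if a.val = b.val then a.val else min (min a.val b.val) K := by
  show ((figDTree K).lca a b).val = _
  rw [fig_lca]; unfold mfin; split <;> rfl

private lemma dep_mfin (a b : Fin (K + 3)) :
    dep K (mfin K a b) =
      if a.val = b.val then dep K a else min (min a.val b.val) K := by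
  unfold mfin
  split
  · rfl
  · show dep K (⟨min (min a.val b.val) K, _⟩ : Fin (K+3)) = _
    unfold dep
    simp only [if_pos (by omega : min (min a.val b.val) K ≤ K)]

private lemma fig_join_val (a b : Fin (K + 3)) :
    ((figDTree K).join a b).val =
      if K < a.val ∧ K < b.val ∧ a.val ≠ b.val then K else max a.val b.val := by
  unfold RTree.join RTree.pathVertex RTree.dist
  rw [fig_lca]
  simp only [fig_depth, dep_mfin]
  rcases dep_facts a with ⟨ga1, ga2⟩ | ⟨ga1, ga2, ga3⟩ <;>
    rcases dep_facts b with ⟨gb1, gb2⟩ | ⟨gb1, gb2, gb3⟩ <;>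
    split_ifs <;>
    (try simp only [fig_iter']) <;>
    (try split_ifs) <;>
    omega

end Aux
section Phiv

variable {K : ℕ}

/-- single-coordinate version of `psi` -/
private def phiv (K x kv : ℕ) : SignType :=
  if x ≤ K then (if kv < x then 1 else 0)
  else if kv < K then 1
  else if x = K + 1 then -1 else 1

private lemma psi_eq_phiv {ι : Type*} (x : ι → Fin (K + 3)) (i : ι) (k : Fin (K + 1)) :
    psi K x i k = phiv K (x i).val k.val := rfl

private lemma phivA (x kv : ℕ) (h1 : x ≤ K) (h2 : kv < x) : phiv K x kv = 1 := by
  unfold phiv; rw [if_pos h1, if_pos h2]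
private lemma phivB (x kv : ℕ) (h1 : x ≤ K) (h2 : ¬ kv < x) : phiv K x kv = 0 := by
  unfold phiv; rw [if_pos h1, if_neg h2]
private lemma phivC (x kv : ℕ) (h1 : ¬ x ≤ K) (h2 : kv < K) : phiv K x kv = 1 := by
  unfold phiv; rw [if_neg h1, if_pos h2]
private lemma phivD (x kv : ℕ) (h1 : ¬ x ≤ K) (h2 : ¬ kv < K) (h3 : x = K + 1) :
    phiv K x kv = -1 := by
  unfold phiv; rw [if_neg h1, if_neg h2, if_pos h3]
private lemma phivE (x kv : ℕ) (h1 : ¬ x ≤ K) (h2 : ¬ kv < K) (h3 : x ≠ K + 1) :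
    phiv K x kv = 1 := by
  unfold phiv; rw [if_neg h1, if_neg h2, if_neg h3]

private lemma phiv_swedge (x y kv : ℕ) (hx : x ≤ K + 2) (hy : y ≤ K + 2) (hk : kv ≤ K) :
    phiv K (if x = y then x else min (min x y) K) kv = swedge (phiv K x kv) (phiv K y kv) := by
  rcases eq_or_ne x y with rfl | hxy
  · rw [if_pos rfl]; unfold swedge; rw [if_pos rfl]
  · rw [if_neg hxy]
    by_cases h1 : x ≤ K <;> by_cases h2 : y ≤ K
    · by_cases h3 : kv < x <;> by_cases h4 : kv < y
      · rw [phivA _ _ (by omega) (by omega), phivA _ _ h1 h3, phivA _ _ h2 h4]; decide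
      · rw [phivB _ _ (by omega) (by omega), phivA _ _ h1 h3, phivB _ _ h2 h4]; decide
      · rw [phivB _ _ (by omega) (by omega), phivB _ _ h1 h3, phivA _ _ h2 h4]; decide
      · rw [phivB _ _ (by omega) (by omega), phivB _ _ h1 h3, phivB _ _ h2 h4]; decide
    · -- x ≤ K < y
      by_cases h3 : kv < x
      · rw [phivA _ _ (by omega) (by omega), phivA _ _ h1 h3, phivC _ _ h2 (by omega)]; decide
      · rw [phivB _ _ (by omega) (by omega), phivB _ _ h1 h3]
        by_cases h5 : kv < K
        · rw [phivC _ _ h2 h5]; decide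
        · by_cases h6 : y = K + 1
          · rw [phivD _ _ h2 h5 h6]; decide
          · rw [phivE _ _ h2 h5 h6]; decide
    · -- y ≤ K < x
      by_cases h4 : kv < y
      · rw [phivA _ _ (by omega) (by omega), phivA _ _ h2 h4, phivC _ _ h1 (by omega)]; decide
      · rw [phivB _ _ (by omega) (by omega), phivB _ _ h2 h4]
        by_cases h5 : kv < K
        · rw [phivC _ _ h1 h5]; decide
        · by_cases h6 : x = K + 1
          · rw [phivD _ _ h1 h5 h6]; decide
          · rw [phivE _ _ h1 h5 h6]; decide
    · -- K < x, K < y, x ≠ y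
      by_cases h5 : kv < K
      · rw [phivA _ _ (by omega) (by omega), phivC _ _ h1 h5, phivC _ _ h2 h5]; decide
      · rw [phivB _ _ (by omega) (by omega)]
        by_cases h6 : x = K + 1
        · rw [phivD _ _ h1 h5 h6, phivE _ _ h2 h5 (by omega)]; decide
        · rw [phivE _ _ h1 h5 h6, phivD _ _ h2 h5 (by omega)]; decide

private lemma phiv_svee (x y kv : ℕ) (hx : x ≤ K + 2) (hy : y ≤ K + 2) (hk : kv ≤ K) :
    phiv K (if K < x ∧ K < y ∧ x ≠ y then K else max x y) kv
      = svee (phiv K x kv) (phiv K y kv) := by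
  rcases eq_or_ne x y with rfl | hxy
  · rw [if_neg (by omega), Nat.max_self]; unfold svee; rw [if_pos rfl]
  · by_cases h1 : x ≤ K <;> by_cases h2 : y ≤ K
    · rw [if_neg (by omega)]
      by_cases h3 : kv < x <;> by_cases h4 : kv < y
      · rw [phivA _ _ (by omega) (by omega), phivA _ _ h1 h3, phivA _ _ h2 h4]; decide
      · rw [phivA _ _ (by omega) (by omega), phivA _ _ h1 h3, phivB _ _ h2 h4]; decide
      · rw [phivA _ _ (by omega) (by omega), phivB _ _ h1 h3, phivA _ _ h2 h4]; decide
      · rw [phivB _ _ (by omega) (by omega), phivB _ _ h1 h3, phivB _ _ h2 h4]; decide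
    · -- x ≤ K < y : max = y
      rw [if_neg (by omega), Nat.max_eq_right (by omega)]
      by_cases h3 : kv < x
      · rw [phivC _ _ h2 (by omega), phivA _ _ h1 h3]; decide
      · rw [phivB _ _ h1 h3]
        by_cases h5 : kv < K
        · rw [phivC _ _ h2 h5]; decide
        · by_cases h6 : y = K + 1
          · rw [phivD _ _ h2 h5 h6]; decide
          · rw [phivE _ _ h2 h5 h6]; decide
    · -- y ≤ K < x : max = x
      rw [if_neg (by omega), Nat.max_eq_left (by omega)]
      by_cases h4 : kv < y
      · rw [phivC _ _ h1 (by omega), phivA _ _ h2 h4]; decide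
      · rw [phivB _ _ h2 h4]
        by_cases h5 : kv < K
        · rw [phivC _ _ h1 h5]; decide
        · by_cases h6 : x = K + 1
          · rw [phivD _ _ h1 h5 h6]; decide
          · rw [phivE _ _ h1 h5 h6]; decide
    · -- K < x, K < y, x ≠ y
      rw [if_pos ⟨by omega, by omega, hxy⟩]
      by_cases h5 : kv < K
      · rw [phivA _ _ (by omega) (by omega), phivC _ _ h1 h5, phivC _ _ h2 h5]; decide
      · rw [phivB _ _ (by omega) (by omega)]
        by_cases h6 : x = K + 1
        · rw [phivD _ _ h1 h5 h6, phivE _ _ h2 h5 (by omega)]; decide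
        · rw [phivE _ _ h1 h5 h6, phivD _ _ h2 h5 (by omega)]; decide

private lemma phiv_inj (x y : ℕ) (hx : x ≤ K + 2) (hy : y ≤ K + 2)
    (h : ∀ kv ≤ K, phiv K x kv = phiv K y kv) : x = y := by
  by_contra hxy
  have hh := h (min (min x y) K) (by omega)
  by_cases h1 : x ≤ K <;> by_cases h2 : y ≤ K
  · rcases Nat.lt_or_ge x y with hlt | hge
    · rw [phivB _ _ h1 (by omega), phivA _ _ h2 (by omega)] at hh; exact absurd hh (by decide)
    · rw [phivA _ _ h1 (by omega), phivB _ _ h2 (by omega)] at hh; exact absurd hh (by decide)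
  · -- x ≤ K < y ; kv0 = x
    rw [phivB _ _ h1 (by omega)] at hh
    by_cases h5 : min (min x y) K < K
    · rw [phivC _ _ h2 h5] at hh; exact absurd hh (by decide)
    · by_cases h6 : y = K + 1
      · rw [phivD _ _ h2 h5 h6] at hh; exact absurd hh (by decide)
      · rw [phivE _ _ h2 h5 h6] at hh; exact absurd hh (by decide)
  · rw [phivB _ _ h2 (by omega)] at hh
    by_cases h5 : min (min x y) K < K
    · rw [phivC _ _ h1 h5] at hh; exact absurd hh (by decide)
    · by_cases h6 : x = K + 1
      · rw [phivD _ _ h1 h5 h6] at hh; exact absurd hh (by decide)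
      · rw [phivE _ _ h1 h5 h6] at hh; exact absurd hh (by decide)
  · -- both > K
    have h5 : ¬ min (min x y) K < K := by omega
    by_cases h6 : x = K + 1
    · rw [phivD _ _ h1 h5 h6, phivE _ _ h2 h5 (by omega)] at hh; exact absurd hh (by decide)
    · rw [phivE _ _ h1 h5 h6, phivD _ _ h2 h5 (by omega)] at hh; exact absurd hh (by decide)

end Phiv

/-- `ψ` is injective and preserves the componentwise operations `∧` and
`∨`; consequently its image is closed under `∧` and `∨` (it is a signed ring family). -/
theorem psi_injective_preserves_wedge_vee {ι : Type*} [Fintype ι] (K : ℕ) :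
    Function.Injective (psi (ι := ι) K) ∧
    (∀ x y : ι → Fin (K + 3),
      psi K (fun i => (figDTree K).meet (x i) (y i)) =
        fun i k => swedge (psi K x i k) (psi K y i k)) ∧
    (∀ x y : ι → Fin (K + 3),
      psi K (fun i => (figDTree K).join (x i) (y i)) =
        fun i k => svee (psi K x i k) (psi K y i k)) ∧
    (∀ a ∈ Set.range (psi (ι := ι) K), ∀ b ∈ Set.range (psi (ι := ι) K),
      (fun i k => swedge (a i k) (b i k)) ∈ Set.range (psi (ι := ι) K) ∧
      (fun i k => svee (a i k) (b i k)) ∈ Set.range (psi (ι := ι) K)) := by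

  have hbx : ∀ (x : ι → Fin (K + 3)) (i : ι), (x i).val ≤ K + 2 := fun x i => by
    have := (x i).isLt; omega
  have hmeet : ∀ x y : ι → Fin (K + 3),
      psi K (fun i => (figDTree K).meet (x i) (y i)) =
        fun i k => swedge (psi K x i k) (psi K y i k) := by
    intro x y
    funext i k
    rw [psi_eq_phiv, psi_eq_phiv, psi_eq_phiv]
    show phiv K ((figDTree K).meet (x i) (y i)).val k.val = _
    rw [fig_meet_val]
    exact phiv_swedge _ _ _ (hbx x i) (hbx y i) (by have := k.isLt; omega)
  have hjoin : ∀ x y : ι → Fin (K + 3),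
      psi K (fun i => (figDTree K).join (x i) (y i)) =
        fun i k => svee (psi K x i k) (psi K y i k) := by
    intro x y
    funext i k
    rw [psi_eq_phiv, psi_eq_phiv, psi_eq_phiv]
    show phiv K ((figDTree K).join (x i) (y i)).val k.val = _
    rw [fig_join_val]
    exact phiv_svee _ _ _ (hbx x i) (hbx y i) (by have := k.isLt; omega)
  refine ⟨?_, hmeet, hjoin, ?_⟩
  · intro x y h
    funext i
    apply Fin.ext
    apply phiv_inj _ _ (hbx x i) (hbx y i)
    intro kv hkv
    have hh := congrFun (congrFun h i) ⟨kv, by omega⟩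
    rwa [psi_eq_phiv, psi_eq_phiv] at hh
  · rintro a ⟨x, rfl⟩ b ⟨y, rfl⟩
    exact ⟨⟨_, hmeet x y⟩, ⟨_, hjoin x y⟩⟩
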